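/- Let r, c, ρ, v, f_1,…,f_m be as in the context, and assume additionally that v is monotonically decreasing (v' ≤ 0). For a nonnegative, continuous, compactly supported g : ℝ^d → ℝ let W_g(η) = ∫_{ℝ^d} v(∑_{j=1}^m η_j f_j(x)) g(x) dx and μ_g = Z_g^{-1} e^{-W_g} ρ^{⊗m} with Z_g = ∫ e^{-W_g} dρ^{⊗m}. If g_1 ≤ g_2 pointwise (both nonnegative, continuous, compactly supported), then for every bounded measurable F : ℝ^m → ℝ that is monotonically increasing with respect to the coordinatewise order, ∫ F dμ_{g_1} ≤ ∫ F dμ_{g_2}. -/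

import Mathlib

open MeasureTheory

/-- Convolution of two measures on `ℝ` (law of the sum of independent variables). -/
noncomputable def mconv (μ ν : Measure ℝ) : Measure ℝ :=
  (μ.prod ν).map (fun p => p.1 + p.2)

/-- `n`-fold convolution power of a measure on `ℝ`, with `r^{*0} = δ₀`. -/
noncomputable def convPow (r : Measure ℝ) : ℕ → Measure ℝ
  | 0 => Measure.dirac 0
  | n + 1 => mconv (convPow r n) r

/-- The compound Poisson measure `ρ_{c,r} = e^{-c} ∑_{n} (c^n / n!) r^{*n}`. -/
noncomputable def cPoisson (c : ℝ) (r : Measure ℝ) : Measure ℝ :=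
  Measure.sum (fun n : ℕ =>
    ENNReal.ofReal (Real.exp (-c) * c ^ n / n.factorial) • convPow r n)

open ENNReal


/-- Scalar Ahlswede–Daykin lemma. -/
lemma ad_scalar {A B C D : ℝ≥0∞} (hA : A ≤ C) (hB : B ≤ C) (hAB : A * B ≤ C * D) :
    A + B ≤ C + D := by
  rcases eq_or_ne C ∞ with hC | hC
  · simp [hC]
  rcases eq_or_ne D ∞ with hD | hD
  · simp [hD]
  have hAf : A ≠ ∞ := fun h => hC (top_le_iff.mp (h ▸ hA))
  have hBf : B ≠ ∞ := fun h => hC (top_le_iff.mp (h ▸ hB))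
  rw [← ENNReal.toReal_le_toReal (by simp [hAf, hBf]) (by simp [hC, hD]),
    ENNReal.toReal_add hAf hBf, ENNReal.toReal_add hC hD]
  have hA' : A.toReal ≤ C.toReal := ENNReal.toReal_le_toReal hAf hC |>.mpr hA
  have hB' : B.toReal ≤ C.toReal := ENNReal.toReal_le_toReal hBf hC |>.mpr hB
  have hAB' : A.toReal * B.toReal ≤ C.toReal * D.toReal := by
    rw [← ENNReal.toReal_mul, ← ENNReal.toReal_mul]
    exact ENNReal.toReal_le_toReal (ENNReal.mul_ne_top hAf hBf) (ENNReal.mul_ne_top hC hD) |>.mpr hAB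
  have h0A : 0 ≤ A.toReal := ENNReal.toReal_nonneg
  have h0B : 0 ≤ B.toReal := ENNReal.toReal_nonneg
  have h0D : 0 ≤ D.toReal := ENNReal.toReal_nonneg
  rcases eq_or_lt_of_le (le_trans h0A hA') with hC0 | hC0
  · nlinarith
  · nlinarith [mul_nonneg (sub_nonneg.2 hA') (sub_nonneg.2 hB')]

/-- The Ahlswede–Daykin (four functions) property of a measure on a
measurable lattice. -/
def ADProp {X : Type*} [MeasurableSpace X] [Lattice X] (μ : Measure X) : Prop :=
  ∀ α β γ δ : X → ℝ≥0∞, Measurable α → Measurable β → Measurable γ → Measurable δ →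
    (∀ a b, α a * β b ≤ γ (a ⊔ b) * δ (a ⊓ b)) →
    (∫⁻ x, α x ∂μ) * (∫⁻ x, β x ∂μ) ≤ (∫⁻ x, γ x ∂μ) * (∫⁻ x, δ x ∂μ)

/-- AD inequality on a linear order, e.g. `ℝ`: holds for every measure. -/
lemma adProp_of_linearOrder {X : Type*} [MeasurableSpace X] [LinearOrder X]
    (μ : Measure X) : ADProp μ := by
  intro α β γ δ hα hβ hγ hδ hyp
  -- pointwise symmetrized inequality
  have key : ∀ a b, α a * β b + α b * β a ≤ γ a * δ b + γ b * δ a := by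
    have key' : ∀ a b, a ≤ b → α a * β b + α b * β a ≤ γ a * δ b + γ b * δ a := by
      intro a b hab
      have h1 : α a * β b ≤ γ b * δ a := by
        have := hyp a b; rwa [sup_eq_right.2 hab, inf_eq_left.2 hab] at this
      have h2 : α b * β a ≤ γ b * δ a := by
        have := hyp b a; rwa [sup_eq_left.2 hab, inf_eq_right.2 hab] at this
      have h3 : (α a * β b) * (α b * β a) ≤ (γ b * δ a) * (γ a * δ b) := by
        have ha := hyp a a; have hb := hyp b b
        simp only [sup_idem, inf_idem] at ha hb
        calc (α a * β b) * (α b * β a) = (α a * β a) * (α b * β b) := by ring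
          _ ≤ (γ a * δ a) * (γ b * δ b) := mul_le_mul' ha hb
          _ = (γ b * δ a) * (γ a * δ b) := by ring
      calc α a * β b + α b * β a ≤ (γ b * δ a) + (γ a * δ b) := ad_scalar h1 h2 h3
        _ = γ a * δ b + γ b * δ a := add_comm _ _
    intro a b
    rcases le_total a b with h | h
    · exact key' a b h
    · calc α a * β b + α b * β a = α b * β a + α a * β b := add_comm _ _
        _ ≤ γ b * δ a + γ a * δ b := key' b a h
        _ = γ a * δ b + γ b * δ a := add_comm _ _
  have expand : ∀ (p q : X → ℝ≥0∞), Measurable p → Measurable q →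
      ∫⁻ a, ∫⁻ b, (p a * q b + p b * q a) ∂μ ∂μ
        = 2 * ((∫⁻ x, p x ∂μ) * (∫⁻ x, q x ∂μ)) := by
    intro p q hp hq
    have inner : ∀ a, ∫⁻ b, (p a * q b + p b * q a) ∂μ
        = p a * (∫⁻ x, q x ∂μ) + (∫⁻ x, p x ∂μ) * q a := by
      intro a
      rw [lintegral_add_left (hq.const_mul (p a)), lintegral_const_mul _ hq,
        lintegral_mul_const _ hp]
    calc ∫⁻ a, ∫⁻ b, (p a * q b + p b * q a) ∂μ ∂μ
        = ∫⁻ a, (p a * (∫⁻ x, q x ∂μ) + (∫⁻ x, p x ∂μ) * q a) ∂μ := by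
          exact lintegral_congr inner
      _ = (∫⁻ x, p x ∂μ) * (∫⁻ x, q x ∂μ) + (∫⁻ x, p x ∂μ) * (∫⁻ x, q x ∂μ) := by
          rw [lintegral_add_left (hp.mul_const _), lintegral_mul_const _ hp,
            lintegral_const_mul _ hq]
      _ = 2 * ((∫⁻ x, p x ∂μ) * (∫⁻ x, q x ∂μ)) := by ring
  have mono : ∫⁻ a, ∫⁻ b, (α a * β b + α b * β a) ∂μ ∂μ
      ≤ ∫⁻ a, ∫⁻ b, (γ a * δ b + γ b * δ a) ∂μ ∂μ :=
    lintegral_mono fun a => lintegral_mono fun b => key a b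
  rw [expand α β hα hβ, expand γ δ hγ hδ] at mono
  exact (ENNReal.mul_le_mul_iff_right (by norm_num) (by norm_num)).mp mono

/-- AD property passes to products. -/
lemma ADProp.prod {X Y : Type*} [MeasurableSpace X] [Lattice X]
    [MeasurableSpace Y] [Lattice Y] {μ : Measure X} {ν : Measure Y}
    [SFinite μ] [SFinite ν] (hμ : ADProp μ) (hν : ADProp ν) :
    ADProp (μ.prod ν) := by
  intro α β γ δ hα hβ hγ hδ hyp
  set α' : Y → ℝ≥0∞ := fun t => ∫⁻ x, α (x, t) ∂μ with hα'def
  set β' : Y → ℝ≥0∞ := fun t => ∫⁻ x, β (x, t) ∂μ with hβ'def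
  set γ' : Y → ℝ≥0∞ := fun t => ∫⁻ x, γ (x, t) ∂μ with hγ'def
  set δ' : Y → ℝ≥0∞ := fun t => ∫⁻ x, δ (x, t) ∂μ with hδ'def
  have hα' : Measurable α' := hα.lintegral_prod_left'
  have hβ' : Measurable β' := hβ.lintegral_prod_left'
  have hγ' : Measurable γ' := hγ.lintegral_prod_left'
  have hδ' : Measurable δ' := hδ.lintegral_prod_left'
  have step : ∀ s t : Y, α' s * β' t ≤ γ' (s ⊔ t) * δ' (s ⊓ t) := by
    intro s t
    refine hμ (fun x => α (x, s)) (fun x => β (x, t)) (fun x => γ (x, s ⊔ t))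
      (fun x => δ (x, s ⊓ t)) (hα.comp (by fun_prop)) (hβ.comp (by fun_prop))
      (hγ.comp (by fun_prop)) (hδ.comp (by fun_prop)) ?_
    intro a b
    have := hyp (a, s) (b, t)
    simpa [Prod.sup_def, Prod.inf_def] using this
  have final := hν α' β' γ' δ' hα' hβ' hγ' hδ' step
  rw [lintegral_prod_symm _ hα.aemeasurable, lintegral_prod_symm _ hβ.aemeasurable,
    lintegral_prod_symm _ hγ.aemeasurable, lintegral_prod_symm _ hδ.aemeasurable]
  exact final

/-- AD transports along a measurable-equivalence that is a lattice hom. -/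
lemma ADProp.map {X Y : Type*} [MeasurableSpace X] [Lattice X]
    [MeasurableSpace Y] [Lattice Y] {μ : Measure X} (e : X ≃ᵐ Y)
    (hsup : ∀ a b, e (a ⊔ b) = e a ⊔ e b) (hinf : ∀ a b, e (a ⊓ b) = e a ⊓ e b)
    (h : ADProp μ) : ADProp (μ.map e) := by
  intro α β γ δ hα hβ hγ hδ hyp
  rw [lintegral_map hα e.measurable, lintegral_map hβ e.measurable,
    lintegral_map hγ e.measurable, lintegral_map hδ e.measurable]
  refine h (α ∘ e) (β ∘ e) (γ ∘ e) (δ ∘ e) (hα.comp e.measurable) (hβ.comp e.measurable)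
    (hγ.comp e.measurable) (hδ.comp e.measurable) ?_
  intro a b
  simpa [Function.comp, hsup, hinf] using hyp (e a) (e b)

lemma insertNth_sup {n : ℕ} (i : Fin (n + 1)) (t t' : ℝ) (y y' : Fin n → ℝ) :
    (i.insertNth (t ⊔ t') (y ⊔ y') : Fin (n+1) → ℝ) = i.insertNth t y ⊔ i.insertNth t' y' := by
  funext j
  refine Fin.succAboveCases i ?_ ?_ j
  · simp
  · intro k; simp

lemma insertNth_inf {n : ℕ} (i : Fin (n + 1)) (t t' : ℝ) (y y' : Fin n → ℝ) :
    (i.insertNth (t ⊓ t') (y ⊓ y') : Fin (n+1) → ℝ) = i.insertNth t y ⊓ i.insertNth t' y' := by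
  funext j
  refine Fin.succAboveCases i ?_ ?_ j
  · simp
  · intro k; simp

/-- AD property for finite products of a fixed s-finite measure on `ℝ`. -/
lemma adProp_pi (ρ : Measure ℝ) [SigmaFinite ρ] (n : ℕ) :
    ADProp (Measure.pi fun _ : Fin n => ρ) := by
  induction n with
  | zero =>
      intro α β γ δ hα hβ hγ hδ hyp
      rw [lintegral_unique, lintegral_unique, lintegral_unique, lintegral_unique]
      have this : ∀ a : Fin 0 → ℝ, α a * β a ≤ γ a * δ a := fun a => by
        simpa using hyp a a
      refine le_trans (le_of_eq (mul_mul_mul_comm _ _ _ _))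
        (le_trans (mul_le_mul' (this _) le_rfl) (le_of_eq (mul_mul_mul_comm _ _ _ _)))
  | succ n ih =>
      have hmp := measurePreserving_piFinSuccAbove (fun _ : Fin (n + 1) => ρ) 0
      set e := MeasurableEquiv.piFinSuccAbove (fun _ : Fin (n + 1) => ℝ) 0 with he
      have hprod : ADProp (ρ.prod (Measure.pi fun _ : Fin n => ρ)) :=
        (adProp_of_linearOrder ρ).prod ih
      have hsymm : ∀ p : ℝ × (Fin n → ℝ),
          e.symm p = ((0 : Fin (n + 1)).insertNth p.1 p.2 : Fin (n + 1) → ℝ) := by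
        intro p
        simp [he, MeasurableEquiv.piFinSuccAbove_symm_apply, Fin.insertNthEquiv]
      have hmap : ADProp ((ρ.prod (Measure.pi fun _ : Fin n => ρ)).map e.symm) := by
        refine hprod.map e.symm ?_ ?_
        · intro a b
          rw [hsymm, hsymm, hsymm, Prod.fst_sup, Prod.snd_sup, insertNth_sup]
        · intro a b
          rw [hsymm, hsymm, hsymm, Prod.fst_inf, Prod.snd_inf, insertNth_inf]
      have : (ρ.prod (Measure.pi fun _ : Fin n => ρ)).map e.symm
          = Measure.pi fun _ : Fin (n + 1) => ρ := by
        rw [← hmp.map_eq, MeasurableEquiv.map_symm_map]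
      rwa [this] at hmap

lemma convPow_isProb (r : Measure ℝ) [IsProbabilityMeasure r] (n : ℕ) :
    IsProbabilityMeasure (convPow r n) := by
  induction n with
  | zero => exact Measure.dirac.isProbabilityMeasure
  | succ n ih =>
      haveI := ih
      constructor
      rw [convPow, mconv, Measure.map_apply (by fun_prop) MeasurableSet.univ]
      simp

lemma exp_series_tsum (x : ℝ) : ∑' n : ℕ, x ^ n / n.factorial = Real.exp x := by
  rw [Real.exp_eq_exp_ℝ, NormedSpace.exp_eq_tsum_div]

lemma exp_series_summable (x : ℝ) : Summable (fun n : ℕ => x ^ n / n.factorial) :=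
  Real.summable_pow_div_factorial x

lemma cPoisson_isProb (c : ℝ) (hc : 0 ≤ c) (r : Measure ℝ) [IsProbabilityMeasure r] :
    IsProbabilityMeasure (cPoisson c r) := by
  constructor
  rw [cPoisson, Measure.sum_apply _ MeasurableSet.univ]
  have : ∀ n : ℕ, (ENNReal.ofReal (Real.exp (-c) * c ^ n / n.factorial) • convPow r n) Set.univ
      = ENNReal.ofReal (Real.exp (-c) * c ^ n / n.factorial) := by
    intro n
    haveI := convPow_isProb r n
    simp
  rw [tsum_congr this, ← ENNReal.ofReal_tsum_of_nonneg (fun n => by positivity)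
    (by simpa [mul_div_assoc] using (exp_series_summable c).mul_left (Real.exp (-c)))]
  have : ∑' n : ℕ, Real.exp (-c) * c ^ n / n.factorial = 1 := by
    simp_rw [mul_div_assoc]
    rw [tsum_mul_left, exp_series_tsum, ← Real.exp_add]
    simp
  simp [this]

/-- Exponential moment bound for convolution powers of a compactly supported measure. -/
lemma convPow_exp_moment (r : Measure ℝ) [IsProbabilityMeasure r] (C : ℝ)
    (hsupp : r (Set.Icc (-C) C)ᶜ = 0) (K : ℝ) (hK : 0 ≤ K) (hC : 0 ≤ C) (n : ℕ) :
    ∫⁻ t, ENNReal.ofReal (Real.exp (K * |t|)) ∂(convPow r n)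
      ≤ ENNReal.ofReal (Real.exp (K * C)) ^ n := by
  have hmeas : Measurable fun t : ℝ => ENNReal.ofReal (Real.exp (K * |t|)) := by fun_prop
  have hr : ∫⁻ t, ENNReal.ofReal (Real.exp (K * |t|)) ∂r ≤ ENNReal.ofReal (Real.exp (K * C)) := by
    have hae : ∀ᵐ t ∂r, t ∈ Set.Icc (-C) C := by
      rw [ae_iff]
      have h' : {a : ℝ | ¬ a ∈ Set.Icc (-C) C} = (Set.Icc (-C) C)ᶜ := rfl
      rw [h', hsupp]
    calc ∫⁻ t, ENNReal.ofReal (Real.exp (K * |t|)) ∂r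
        ≤ ∫⁻ _, ENNReal.ofReal (Real.exp (K * C)) ∂r := by
          refine lintegral_mono_ae (hae.mono fun t ht => ?_)
          have : |t| ≤ C := abs_le.mpr ⟨ht.1, ht.2⟩
          exact ENNReal.ofReal_le_ofReal (Real.exp_le_exp.mpr
            (mul_le_mul_of_nonneg_left this hK))
      _ = ENNReal.ofReal (Real.exp (K * C)) := by simp
  induction n with
  | zero =>
      rw [convPow, lintegral_dirac' _ hmeas]
      simp
  | succ n ih =>
      haveI := convPow_isProb r n
      rw [convPow, mconv, lintegral_map hmeas (by fun_prop),
        lintegral_prod _ (by fun_prop : Measurable fun p : ℝ × ℝ =>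
          ENNReal.ofReal (Real.exp (K * |p.1 + p.2|))).aemeasurable]
      calc ∫⁻ x, ∫⁻ y, ENNReal.ofReal (Real.exp (K * |x + y|)) ∂r ∂(convPow r n)
          ≤ ∫⁻ x, ∫⁻ y, ENNReal.ofReal (Real.exp (K * |x|)) * ENNReal.ofReal (Real.exp (K * |y|)) ∂r
              ∂(convPow r n) := by
            refine lintegral_mono fun x => lintegral_mono fun y => ?_
            rw [← ENNReal.ofReal_mul (by positivity), ← Real.exp_add, ← mul_add]
            exact ENNReal.ofReal_le_ofReal (Real.exp_le_exp.mpr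
              (mul_le_mul_of_nonneg_left (abs_add_le x y) hK))
        _ = ∫⁻ x, ENNReal.ofReal (Real.exp (K * |x|)) * ∫⁻ y, ENNReal.ofReal (Real.exp (K * |y|)) ∂r
              ∂(convPow r n) := by
            congr 1; funext x
            exact lintegral_const_mul _ (by fun_prop)
        _ ≤ ∫⁻ x, ENNReal.ofReal (Real.exp (K * |x|)) * ENNReal.ofReal (Real.exp (K * C))
              ∂(convPow r n) := by
            exact lintegral_mono fun x => mul_le_mul' le_rfl hr
        _ = (∫⁻ x, ENNReal.ofReal (Real.exp (K * |x|)) ∂(convPow r n)) *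
              ENNReal.ofReal (Real.exp (K * C)) := lintegral_mul_const _ hmeas
        _ ≤ ENNReal.ofReal (Real.exp (K * C)) ^ n * ENNReal.ofReal (Real.exp (K * C)) :=
            mul_le_mul' ih le_rfl
        _ = ENNReal.ofReal (Real.exp (K * C)) ^ (n + 1) := by rw [pow_succ]

lemma cPoisson_exp_moment (c : ℝ) (hc : 0 ≤ c) (r : Measure ℝ) [IsProbabilityMeasure r] (C : ℝ)
    (hsupp : r (Set.Icc (-C) C)ᶜ = 0) (K : ℝ) (hK : 0 ≤ K) (hC : 0 ≤ C) :
    ∫⁻ t, ENNReal.ofReal (Real.exp (K * |t|)) ∂(cPoisson c r) < ⊤ := by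
  rw [cPoisson, lintegral_sum_measure]
  have step : ∀ n : ℕ, ∫⁻ t, ENNReal.ofReal (Real.exp (K * |t|))
      ∂(ENNReal.ofReal (Real.exp (-c) * c ^ n / n.factorial) • convPow r n)
      ≤ ENNReal.ofReal (Real.exp (-c) * (c * Real.exp (K * C)) ^ n / n.factorial) := by
    intro n
    rw [lintegral_smul_measure]
    calc ENNReal.ofReal (Real.exp (-c) * c ^ n / n.factorial) *
          ∫⁻ t, ENNReal.ofReal (Real.exp (K * |t|)) ∂(convPow r n)
        ≤ ENNReal.ofReal (Real.exp (-c) * c ^ n / n.factorial) *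
          ENNReal.ofReal (Real.exp (K * C)) ^ n :=
          mul_le_mul' le_rfl (convPow_exp_moment r C hsupp K hK hC n)
      _ = ENNReal.ofReal (Real.exp (-c) * (c * Real.exp (K * C)) ^ n / n.factorial) := by
          rw [← ENNReal.ofReal_pow (by positivity), ← ENNReal.ofReal_mul (by positivity)]
          congr 1
          rw [mul_pow]
          ring
  calc ∑' n, ∫⁻ t, ENNReal.ofReal (Real.exp (K * |t|))
        ∂(ENNReal.ofReal (Real.exp (-c) * c ^ n / n.factorial) • convPow r n)
      ≤ ∑' n, ENNReal.ofReal (Real.exp (-c) * (c * Real.exp (K * C)) ^ n / n.factorial) :=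
        ENNReal.tsum_le_tsum step
    _ = ENNReal.ofReal (∑' n, Real.exp (-c) * (c * Real.exp (K * C)) ^ n / n.factorial) := by
        rw [← ENNReal.ofReal_tsum_of_nonneg (fun n => by positivity)
          (by simpa [mul_div_assoc] using
            (exp_series_summable (c * Real.exp (K * C))).mul_left (Real.exp (-c)))]
    _ < ⊤ := ENNReal.ofReal_lt_top

lemma pi_exp_moment (ρ : Measure ℝ) [IsProbabilityMeasure ρ] (K : ℝ)
    (h1 : ∫⁻ t, ENNReal.ofReal (Real.exp (K * |t|)) ∂ρ < ⊤) (n : ℕ) :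
    ∫⁻ η, ENNReal.ofReal (Real.exp (K * ∑ j : Fin n, |η j|))
      ∂(Measure.pi fun _ : Fin n => ρ) < ⊤ := by
  induction n with
  | zero =>
      rw [lintegral_unique]
      haveI : IsProbabilityMeasure (Measure.pi fun _ : Fin 0 => ρ) := by infer_instance
      simp
  | succ n ih =>
      have hmp := measurePreserving_piFinSuccAbove (fun _ : Fin (n + 1) => ρ) 0
      set e := MeasurableEquiv.piFinSuccAbove (fun _ : Fin (n + 1) => ℝ) 0 with he
      have hsymm : ∀ p : ℝ × (Fin n → ℝ),
          e.symm p = ((0 : Fin (n + 1)).insertNth p.1 p.2 : Fin (n + 1) → ℝ) := by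
        intro p
        simp [he, MeasurableEquiv.piFinSuccAbove_symm_apply, Fin.insertNthEquiv]
      have hmeas : Measurable fun η : Fin (n + 1) → ℝ =>
          ENNReal.ofReal (Real.exp (K * ∑ j : Fin (n + 1), |η j|)) := by fun_prop
      have key := (hmp.symm e).lintegral_comp hmeas
      rw [← key]
      have hfun : ∀ p : ℝ × (Fin n → ℝ),
          ENNReal.ofReal (Real.exp (K * ∑ j : Fin (n + 1), |e.symm p j|))
            = ENNReal.ofReal (Real.exp (K * |p.1|)) *
              ENNReal.ofReal (Real.exp (K * ∑ j : Fin n, |p.2 j|)) := by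
        intro p
        rw [hsymm]
        rw [← ENNReal.ofReal_mul (by positivity), ← Real.exp_add, ← mul_add]
        congr 2
        rw [Fin.sum_univ_succAbove (fun j => |(0 : Fin (n + 1)).insertNth p.1 p.2 j|) 0]
        simp
      calc ∫⁻ p, ENNReal.ofReal (Real.exp (K * ∑ j : Fin (n + 1), |e.symm p j|))
            ∂(ρ.prod (Measure.pi fun _ : Fin n => ρ))
          = ∫⁻ p, ENNReal.ofReal (Real.exp (K * |p.1|)) *
              ENNReal.ofReal (Real.exp (K * ∑ j : Fin n, |p.2 j|))
              ∂(ρ.prod (Measure.pi fun _ : Fin n => ρ)) := lintegral_congr hfun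
        _ = (∫⁻ t, ENNReal.ofReal (Real.exp (K * |t|)) ∂ρ) *
            ∫⁻ y, ENNReal.ofReal (Real.exp (K * ∑ j : Fin n, |y j|))
              ∂(Measure.pi fun _ : Fin n => ρ) :=
            lintegral_prod_mul
              ((by fun_prop : Measurable fun t : ℝ =>
                ENNReal.ofReal (Real.exp (K * |t|))).aemeasurable)
              ((by fun_prop : Measurable fun y : Fin n → ℝ =>
                ENNReal.ofReal (Real.exp (K * ∑ j : Fin n, |y j|))).aemeasurable)
        _ < ⊤ := ENNReal.mul_lt_top h1 ih


lemma v_lipschitz_bound (v : ℝ → ℝ) (hv : ContDiff ℝ 2 v) (hv0 : v 0 = 0)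
    (b : ℝ) (hv' : ∀ t, |deriv v t| ≤ b) : ∀ t, |v t| ≤ b * |t| := by
  intro t
  have hdiff : Differentiable ℝ v := hv.differentiable (by norm_num)
  have := Convex.norm_image_sub_le_of_norm_deriv_le (f := v) (s := Set.univ)
    (fun x _ => hdiff x) (fun x _ => hv' x) convex_univ (Set.mem_univ 0) (Set.mem_univ t)
  simpa [hv0] using this

lemma v_concave (v : ℝ → ℝ) (hv : ContDiff ℝ 2 v)
    (hv'' : ∀ t, deriv (deriv v) t ≤ 0) : ConcaveOn ℝ Set.univ v := by
  have hdiff : Differentiable ℝ v := hv.differentiable (by norm_num)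
  have h2 : ContDiff ℝ 1 (deriv v) := by
    have h := (contDiff_succ_iff_deriv (n := 1)).mp (by norm_num at hv ⊢; exact hv)
    exact h.2.2
  refine concaveOn_univ_of_deriv2_nonpos hdiff (h2.differentiable (by norm_num)) ?_
  intro x
  have : (deriv^[2] v) x = deriv (deriv v) x := rfl
  rw [this]
  exact hv'' x

lemma concave_four (v : ℝ → ℝ) (hconc : ConcaveOn ℝ Set.univ v) {p q s : ℝ}
    (hps : p ≤ s) (hsq : s ≤ q) : v p + v q ≤ v s + v (p + q - s) := by
  rcases eq_or_lt_of_le (hps.trans hsq) with h | hpq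
  · have hsp : s = p := le_antisymm (h ▸ hsq) hps
    have h2 : p + q - s = q := by rw [hsp]; ring
    rw [h2, hsp, ← h]
  · set l := (q - s) / (q - p) with hl
    have hqp : 0 < q - p := sub_pos.2 hpq
    have hl0 : 0 ≤ l := div_nonneg (by linarith) hqp.le
    have hl1 : l ≤ 1 := (div_le_one hqp).2 (by linarith)
    have hlq : l * (q - p) = q - s := by
      rw [hl]; field_simp
    have hs : l * p + (1 - l) * q = s := by linear_combination -1 * hlq
    have hs' : (1 - l) * p + l * q = p + q - s := by linear_combination hlq
    have c1 : l • v p + (1 - l) • v q ≤ v (l • p + (1 - l) • q) :=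
      hconc.2 (Set.mem_univ p) (Set.mem_univ q) hl0 (by linarith) (by ring)
    have c2 : (1 - l) • v p + l • v q ≤ v ((1 - l) • p + l • q) :=
      hconc.2 (Set.mem_univ p) (Set.mem_univ q) (by linarith : (0:ℝ) ≤ 1 - l) hl0 (by ring)
    simp only [smul_eq_mul] at c1 c2
    rw [hs] at c1
    rw [hs'] at c2
    linarith

/-- finite lattice analog of Proposition 4.1: for a monotonically
decreasing concave energy density `v`, expectations of coordinatewise increasing
bounded observables under the lattice Gibbs measures `μ_g` are monotone in the
infra-red cutoff `g`: `g₁ ≤ g₂` implies `∫ F dμ_{g₁} ≤ ∫ F dμ_{g₂}`. -/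
theorem lattice_gibbs_monotone_in_cutoff
    (d m : ℕ) (hm : 1 ≤ m) (C : ℝ) (hC : 0 < C)
    (r : Measure ℝ) [IsProbabilityMeasure r] (hsupp : r (Set.Icc (-C) C)ᶜ = 0)
    (c : ℝ) (hc : 0 < c)
    (v : ℝ → ℝ) (hv : ContDiff ℝ 2 v) (hv0 : v 0 = 0)
    (b : ℝ) (hb : 0 < b) (hv' : ∀ t, |deriv v t| ≤ b)
    (hv'' : ∀ t, deriv (deriv v) t ≤ 0) (hvdec : Antitone v)
    (f : Fin m → (Fin d → ℝ) → ℝ) (hf0 : ∀ j x, 0 ≤ f j x)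
    (hfc : ∀ j, Continuous (f j)) (hfs : ∀ j, HasCompactSupport (f j))
    (g₁ g₂ : (Fin d → ℝ) → ℝ)
    (hg₁0 : ∀ x, 0 ≤ g₁ x) (hg₁c : Continuous g₁) (hg₁s : HasCompactSupport g₁)
    (hg₂0 : ∀ x, 0 ≤ g₂ x) (hg₂c : Continuous g₂) (hg₂s : HasCompactSupport g₂)
    (hg : ∀ x, g₁ x ≤ g₂ x)
    (W : ((Fin d → ℝ) → ℝ) → (Fin m → ℝ) → ℝ)
    (hW : ∀ g η, W g η = ∫ x, v (∑ j, η j * f j x) * g x)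
    (μ : ((Fin d → ℝ) → ℝ) → Measure (Fin m → ℝ))
    (hμ : ∀ g, μ g = (Measure.pi fun _ : Fin m => cPoisson c r).withDensity
      (fun η => ENNReal.ofReal (Real.exp (-W g η) /
        ∫ η', Real.exp (-W g η') ∂(Measure.pi fun _ : Fin m => cPoisson c r)))) :
    ∀ F : (Fin m → ℝ) → ℝ, Measurable F → (∃ M, ∀ η, |F η| ≤ M) → Monotone F →
      ∫ η, F η ∂(μ g₁) ≤ ∫ η, F η ∂(μ g₂) := by
  haveI hρP : IsProbabilityMeasure (cPoisson c r) := cPoisson_isProb c hc.le r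
  set ρ : Measure ℝ := cPoisson c r with hρdef
  set P : Measure (Fin m → ℝ) := Measure.pi fun _ : Fin m => ρ with hPdef
  haveI hPprob : IsProbabilityMeasure P := by rw [hPdef]; infer_instance
  have hconc : ConcaveOn ℝ Set.univ v := v_concave v hv hv''
  have hvlip : ∀ t, |v t| ≤ b * |t| := v_lipschitz_bound v hv hv0 b hv'
  -- measurability of the interaction
  have hWmeas : ∀ g : (Fin d → ℝ) → ℝ, Continuous g → Measurable (W g) := by
    intro g hgc
    have hcont : Continuous fun p : (Fin m → ℝ) × (Fin d → ℝ) =>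
        v (∑ j, p.1 j * f j p.2) * g p.2 := by
      refine Continuous.mul ?_ (hgc.comp continuous_snd)
      exact hv.continuous.comp (continuous_finset_sum _ fun j _ =>
        ((continuous_apply j).comp continuous_fst).mul ((hfc j).comp continuous_snd))
    have hsm := hcont.stronglyMeasurable.integral_prod_right' (ν := (volume : Measure (Fin d → ℝ)))
    have hWg : W g = fun η => ∫ x, v (∑ j, η j * f j x) * g x := funext fun η => hW g η
    rw [hWg]
    exact hsm.measurable
  -- integrability in x of the various integrands
  have hIntx : ∀ (g : (Fin d → ℝ) → ℝ), Continuous g → HasCompactSupport g →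
      ∀ η : Fin m → ℝ, Integrable (fun x => v (∑ j, η j * f j x) * g x) := by
    intro g hgc hgs η
    have hcont : Continuous fun x : Fin d → ℝ => v (∑ j, η j * f j x) * g x := by
      refine Continuous.mul ?_ hgc
      exact hv.continuous.comp (continuous_finset_sum _ fun j _ =>
        continuous_const.mul (hfc j))
    exact hcont.integrable_of_hasCompactSupport hgs.mul_left
  have hIntabs : ∀ (g : (Fin d → ℝ) → ℝ), Continuous g → HasCompactSupport g →
      ∀ η : Fin m → ℝ, Integrable (fun x => |v (∑ j, η j * f j x) * g x|) :=
    fun g hgc hgs η => (hIntx g hgc hgs η).abs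
  have hIntfg : ∀ (j : Fin m) (g : (Fin d → ℝ) → ℝ), Continuous g → HasCompactSupport g →
      Integrable (fun x => f j x * g x) := by
    intro j g hgc hgs
    exact ((hfc j).mul hgc).integrable_of_hasCompactSupport hgs.mul_left
  have hIntdom : ∀ (g : (Fin d → ℝ) → ℝ), Continuous g → HasCompactSupport g →
      ∀ η : Fin m → ℝ, Integrable (fun x => (b * ∑ j, |η j| * f j x) * g x) := by
    intro g hgc hgs η
    have hcont : Continuous fun x : Fin d → ℝ => (b * ∑ j, |η j| * f j x) * g x := by
      refine Continuous.mul ?_ hgc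
      exact continuous_const.mul (continuous_finset_sum _ fun j _ =>
        continuous_const.mul (hfc j))
    exact hcont.integrable_of_hasCompactSupport hgs.mul_left
  -- Holley-type lattice inequality for the interactions
  have hHol : ∀ a b' : Fin m → ℝ, W g₂ (a ⊔ b') + W g₁ (a ⊓ b') ≤ W g₁ a + W g₂ b' := by
    intro a b'
    rw [hW, hW, hW, hW]
    rw [← integral_add (hIntx g₂ hg₂c hg₂s _) (hIntx g₁ hg₁c hg₁s _),
      ← integral_add (hIntx g₁ hg₁c hg₁s _) (hIntx g₂ hg₂c hg₂s _)]
    refine integral_mono ((hIntx g₂ hg₂c hg₂s _).add (hIntx g₁ hg₁c hg₁s _))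
      ((hIntx g₁ hg₁c hg₁s _).add (hIntx g₂ hg₂c hg₂s _)) ?_
    intro x
    set A := ∑ j, (a ⊔ b') j * f j x with hA
    set B := ∑ j, (a ⊓ b') j * f j x with hB
    set sa := ∑ j, a j * f j x with hsa
    set sb := ∑ j, b' j * f j x with hsb
    have hsaA : sa ≤ A :=
      Finset.sum_le_sum fun j _ => mul_le_mul_of_nonneg_right le_sup_left (hf0 j x)
    have hsbA : sb ≤ A :=
      Finset.sum_le_sum fun j _ => mul_le_mul_of_nonneg_right le_sup_right (hf0 j x)
    have hABsum : A + B = sa + sb := by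
      rw [hA, hB, hsa, hsb, ← Finset.sum_add_distrib, ← Finset.sum_add_distrib]
      refine Finset.sum_congr rfl fun j _ => ?_
      rw [← add_mul, ← add_mul]
      congr 1
      exact max_add_min (a j) (b' j)
    have hBsa : B ≤ sa := by linarith
    have hc4 : v B + v A ≤ v sa + v (B + A - sa) := concave_four v hconc hBsa hsaA
    have hBAsa : B + A - sa = sb := by linarith
    rw [hBAsa] at hc4
    have hanti : v A ≤ v sb := hvdec hsbA
    show v A * g₂ x + v B * g₁ x ≤ v sa * g₁ x + v sb * g₂ x
    have k1 : 0 ≤ (v sb - v A) * (g₂ x - g₁ x) :=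
      mul_nonneg (by linarith) (by linarith [hg x])
    have k2 : 0 ≤ (v sa + v sb - v A - v B) * g₁ x := mul_nonneg (by linarith) (hg₁0 x)
    nlinarith [k1, k2]
  -- growth bound for W
  set S : ℝ := ∑ j, ∫ x, f j x * g₂ x with hSdef
  have hfg2_le : ∀ (j : Fin m) (g : (Fin d → ℝ) → ℝ), Continuous g → HasCompactSupport g →
      (∀ x, g x ≤ g₂ x) → (∀ x, 0 ≤ g x) → ∫ x, f j x * g x ≤ S := by
    intro j g hgc hgs hgle hg0
    have h1 : ∫ x, f j x * g x ≤ ∫ x, f j x * g₂ x :=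
      integral_mono (hIntfg j g hgc hgs) (hIntfg j g₂ hg₂c hg₂s)
        (fun x => mul_le_mul_of_nonneg_left (hgle x) (hf0 j x))
    refine h1.trans ?_
    refine Finset.single_le_sum (f := fun j => ∫ x, f j x * g₂ x) ?_ (Finset.mem_univ j)
    intro i _
    exact integral_nonneg fun x => mul_nonneg (hf0 i x) (hg₂0 x)
  have hS0 : 0 ≤ S :=
    Finset.sum_nonneg fun j _ => integral_nonneg fun x => mul_nonneg (hf0 j x) (hg₂0 x)
  set K : ℝ := b * (S + 1) with hKdef
  have hK0 : 0 ≤ K := mul_nonneg hb.le (by linarith)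
  have hWb : ∀ (g : (Fin d → ℝ) → ℝ), (∀ x, 0 ≤ g x) → Continuous g → HasCompactSupport g →
      (∀ x, g x ≤ g₂ x) → ∀ η, |W g η| ≤ K * ∑ j, |η j| := by
    intro g hg0 hgc hgs hgle η
    rw [hW]
    have h1 : |∫ x, v (∑ j, η j * f j x) * g x| ≤ ∫ x, |v (∑ j, η j * f j x) * g x| := by
      have := norm_integral_le_integral_norm (μ := (volume : Measure (Fin d → ℝ)))
        (fun x => v (∑ j, η j * f j x) * g x)
      simp only [Real.norm_eq_abs] at this
      exact this
    have h2 : ∫ x, |v (∑ j, η j * f j x) * g x| ≤ ∫ x, (b * ∑ j, |η j| * f j x) * g x := by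
      refine integral_mono (hIntabs g hgc hgs η) (hIntdom g hgc hgs η) fun x => ?_
      rw [abs_mul, abs_of_nonneg (hg0 x)]
      refine mul_le_mul_of_nonneg_right ?_ (hg0 x)
      refine (hvlip _).trans ?_
      refine mul_le_mul_of_nonneg_left ?_ hb.le
      refine (Finset.abs_sum_le_sum_abs _ _).trans ?_
      refine le_of_eq (Finset.sum_congr rfl fun j _ => ?_)
      rw [abs_mul, abs_of_nonneg (hf0 j x)]
    have h3 : ∫ x, (b * ∑ j, |η j| * f j x) * g x = ∑ j, b * |η j| * ∫ x, f j x * g x := by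
      have heq : ∀ x, (b * ∑ j, |η j| * f j x) * g x = ∑ j, b * |η j| * (f j x * g x) := by
        intro x
        rw [Finset.mul_sum, Finset.sum_mul]
        refine Finset.sum_congr rfl fun j _ => by ring
      rw [integral_congr_ae (Filter.Eventually.of_forall heq)]
      rw [integral_finset_sum _ (fun j _ => ((hIntfg j g hgc hgs).const_mul (b * |η j|)))]
      exact Finset.sum_congr rfl fun j _ => integral_const_mul _ _
    have h4 : ∑ j, b * |η j| * ∫ x, f j x * g x ≤ K * ∑ j, |η j| := by
      rw [hKdef, mul_comm b (S + 1), mul_assoc, Finset.mul_sum, Finset.mul_sum]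
      refine Finset.sum_le_sum fun j _ => ?_
      have hle := hfg2_le j g hgc hgs hgle hg0
      have habs : 0 ≤ |η j| := abs_nonneg (η j)
      calc b * |η j| * ∫ x, f j x * g x ≤ b * |η j| * (S + 1) := by
            refine mul_le_mul_of_nonneg_left (by linarith) (mul_nonneg hb.le habs)
        _ = (S + 1) * (b * |η j|) := by ring
    linarith [h1.trans (h2.trans_eq h3)]
  -- integrability of Boltzmann factors
  have hmom := cPoisson_exp_moment c hc.le r C hsupp K hK0 hC.le
  have hpimom : ∫⁻ η, ENNReal.ofReal (Real.exp (K * ∑ j : Fin m, |η j|)) ∂P < ⊤ :=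
    pi_exp_moment ρ K hmom m
  have hIntExp : ∀ (g : (Fin d → ℝ) → ℝ), (∀ x, 0 ≤ g x) → Continuous g →
      HasCompactSupport g → (∀ x, g x ≤ g₂ x) →
      Integrable (fun η => Real.exp (-W g η)) P := by
    intro g hg0 hgc hgs hgle
    refine ⟨(Real.measurable_exp.comp (hWmeas g hgc).neg).aestronglyMeasurable, ?_⟩
    rw [hasFiniteIntegral_iff_ofReal (Filter.Eventually.of_forall fun η => (Real.exp_pos _).le)]
    calc ∫⁻ η, ENNReal.ofReal (Real.exp (-W g η)) ∂P
        ≤ ∫⁻ η, ENNReal.ofReal (Real.exp (K * ∑ j, |η j|)) ∂P := by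
          refine lintegral_mono fun η => ENNReal.ofReal_le_ofReal (Real.exp_le_exp.mpr ?_)
          have h' := abs_le.mp (hWb g hg0 hgc hgs hgle η)
          linarith [h'.1]
      _ < ⊤ := hpimom
  have hIE₁ : Integrable (fun η => Real.exp (-W g₁ η)) P := hIntExp g₁ hg₁0 hg₁c hg₁s hg
  have hIE₂ : Integrable (fun η => Real.exp (-W g₂ η)) P :=
    hIntExp g₂ hg₂0 hg₂c hg₂s fun x => le_rfl
  set Z₁ : ℝ := ∫ η, Real.exp (-W g₁ η) ∂P with hZ₁def
  set Z₂ : ℝ := ∫ η, Real.exp (-W g₂ η) ∂P with hZ₂def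
  have hZpos : ∀ (g : (Fin d → ℝ) → ℝ), Integrable (fun η => Real.exp (-W g η)) P →
      0 < ∫ η, Real.exp (-W g η) ∂P := by
    intro g hint
    rw [integral_pos_iff_support_of_nonneg (fun η => (Real.exp_pos _).le) hint]
    have hsup : Function.support (fun η => Real.exp (-W g η)) = Set.univ :=
      Set.eq_univ_of_forall fun η => (Real.exp_pos _).ne'
    rw [hsup]
    simp
  have hZ₁pos : 0 < Z₁ := hZpos g₁ hIE₁
  have hZ₂pos : 0 < Z₂ := hZpos g₂ hIE₂
  -- the main correlation inequality, for nonnegative observables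
  have main : ∀ G : (Fin m → ℝ) → ℝ, Measurable G → (∀ η, 0 ≤ G η) → (∃ M, ∀ η, |G η| ≤ M) →
      Monotone G →
      (∫ η, G η * Real.exp (-W g₁ η) ∂P) * Z₂ ≤ (∫ η, G η * Real.exp (-W g₂ η) ∂P) * Z₁ := by
    intro G hGmeas hG0 hGbdd hGmono
    have hIG₁ : Integrable (fun η => G η * Real.exp (-W g₁ η)) P := by
      obtain ⟨M, hM⟩ := hGbdd
      refine hIE₁.bdd_mul (c := M) hGmeas.aestronglyMeasurable ?_
      exact Filter.Eventually.of_forall fun η => by simpa [Real.norm_eq_abs] using hM η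
    have hIG₂ : Integrable (fun η => G η * Real.exp (-W g₂ η)) P := by
      obtain ⟨M, hM⟩ := hGbdd
      refine hIE₂.bdd_mul (c := M) hGmeas.aestronglyMeasurable ?_
      exact Filter.Eventually.of_forall fun η => by simpa [Real.norm_eq_abs] using hM η
    have hWm₁ : Measurable fun η => Real.exp (-W g₁ η) :=
      Real.measurable_exp.comp (hWmeas g₁ hg₁c).neg
    have hWm₂ : Measurable fun η => Real.exp (-W g₂ η) :=
      Real.measurable_exp.comp (hWmeas g₂ hg₂c).neg
    have hAD : ADProp P := by rw [hPdef]; exact adProp_pi ρ m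
    have key := hAD
      (fun η => ENNReal.ofReal (G η * Real.exp (-W g₁ η)))
      (fun η => ENNReal.ofReal (Real.exp (-W g₂ η)))
      (fun η => ENNReal.ofReal (G η * Real.exp (-W g₂ η)))
      (fun η => ENNReal.ofReal (Real.exp (-W g₁ η)))
      (ENNReal.measurable_ofReal.comp (hGmeas.mul hWm₁))
      (ENNReal.measurable_ofReal.comp hWm₂)
      (ENNReal.measurable_ofReal.comp (hGmeas.mul hWm₂))
      (ENNReal.measurable_ofReal.comp hWm₁)
      ?_
    · -- convert the lintegral inequality back to real integrals
      have e1 : ENNReal.ofReal (∫ η, G η * Real.exp (-W g₁ η) ∂P)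
          = ∫⁻ η, ENNReal.ofReal (G η * Real.exp (-W g₁ η)) ∂P :=
        ofReal_integral_eq_lintegral_ofReal hIG₁
          (Filter.Eventually.of_forall fun η => mul_nonneg (hG0 η) (Real.exp_pos _).le)
      have e2 : ENNReal.ofReal Z₂ = ∫⁻ η, ENNReal.ofReal (Real.exp (-W g₂ η)) ∂P := by
        rw [hZ₂def]
        exact ofReal_integral_eq_lintegral_ofReal hIE₂
          (Filter.Eventually.of_forall fun η => (Real.exp_pos _).le)
      have e3 : ENNReal.ofReal (∫ η, G η * Real.exp (-W g₂ η) ∂P)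
          = ∫⁻ η, ENNReal.ofReal (G η * Real.exp (-W g₂ η)) ∂P :=
        ofReal_integral_eq_lintegral_ofReal hIG₂
          (Filter.Eventually.of_forall fun η => mul_nonneg (hG0 η) (Real.exp_pos _).le)
      have e4 : ENNReal.ofReal Z₁ = ∫⁻ η, ENNReal.ofReal (Real.exp (-W g₁ η)) ∂P := by
        rw [hZ₁def]
        exact ofReal_integral_eq_lintegral_ofReal hIE₁
          (Filter.Eventually.of_forall fun η => (Real.exp_pos _).le)
      have hrhs0 : 0 ≤ (∫ η, G η * Real.exp (-W g₂ η) ∂P) * Z₁ :=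
        mul_nonneg (integral_nonneg fun η => mul_nonneg (hG0 η) (Real.exp_pos _).le) hZ₁pos.le
      refine (ENNReal.ofReal_le_ofReal_iff hrhs0).mp ?_
      calc ENNReal.ofReal ((∫ η, G η * Real.exp (-W g₁ η) ∂P) * Z₂)
          = ENNReal.ofReal (∫ η, G η * Real.exp (-W g₁ η) ∂P) * ENNReal.ofReal Z₂ :=
            ENNReal.ofReal_mul (integral_nonneg fun η => mul_nonneg (hG0 η) (Real.exp_pos _).le)
        _ = (∫⁻ η, ENNReal.ofReal (G η * Real.exp (-W g₁ η)) ∂P) *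
            ∫⁻ η, ENNReal.ofReal (Real.exp (-W g₂ η)) ∂P := by rw [e1, e2]
        _ ≤ (∫⁻ η, ENNReal.ofReal (G η * Real.exp (-W g₂ η)) ∂P) *
            ∫⁻ η, ENNReal.ofReal (Real.exp (-W g₁ η)) ∂P := key
        _ = ENNReal.ofReal (∫ η, G η * Real.exp (-W g₂ η) ∂P) * ENNReal.ofReal Z₁ := by
            rw [e3, e4]
        _ = ENNReal.ofReal ((∫ η, G η * Real.exp (-W g₂ η) ∂P) * Z₁) :=
            (ENNReal.ofReal_mul (integral_nonneg fun η =>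
              mul_nonneg (hG0 η) (Real.exp_pos _).le)).symm
    · -- the four functions hypothesis (Holley / FKG condition)
      intro a b'
      have h1 : ENNReal.ofReal (G a) ≤ ENNReal.ofReal (G (a ⊔ b')) :=
        ENNReal.ofReal_le_ofReal (hGmono le_sup_left)
      have h2 : ENNReal.ofReal (Real.exp (-W g₁ a)) * ENNReal.ofReal (Real.exp (-W g₂ b'))
          ≤ ENNReal.ofReal (Real.exp (-W g₂ (a ⊔ b'))) *
            ENNReal.ofReal (Real.exp (-W g₁ (a ⊓ b'))) := by
        rw [← ENNReal.ofReal_mul (Real.exp_pos _).le, ← ENNReal.ofReal_mul (Real.exp_pos _).le,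
          ← Real.exp_add, ← Real.exp_add]
        exact ENNReal.ofReal_le_ofReal (Real.exp_le_exp.mpr (by linarith [hHol a b']))
      calc ENNReal.ofReal (G a * Real.exp (-W g₁ a)) * ENNReal.ofReal (Real.exp (-W g₂ b'))
          = ENNReal.ofReal (G a) * (ENNReal.ofReal (Real.exp (-W g₁ a)) *
              ENNReal.ofReal (Real.exp (-W g₂ b'))) := by
            rw [ENNReal.ofReal_mul (hG0 a), mul_assoc]
        _ ≤ ENNReal.ofReal (G (a ⊔ b')) * (ENNReal.ofReal (Real.exp (-W g₂ (a ⊔ b'))) *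
              ENNReal.ofReal (Real.exp (-W g₁ (a ⊓ b')))) := mul_le_mul' h1 h2
        _ = ENNReal.ofReal (G (a ⊔ b') * Real.exp (-W g₂ (a ⊔ b'))) *
              ENNReal.ofReal (Real.exp (-W g₁ (a ⊓ b'))) := by
            rw [ENNReal.ofReal_mul (hG0 _), mul_assoc]
  -- expected value under the Gibbs measures
  intro F hFmeas hFbdd hFmono
  obtain ⟨M, hM⟩ := hFbdd
  have hIF : ∀ (g : (Fin d → ℝ) → ℝ), Integrable (fun η => Real.exp (-W g η)) P →
      Integrable (fun η => F η * Real.exp (-W g η)) P := by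
    intro g hint
    refine hint.bdd_mul (c := M) hFmeas.aestronglyMeasurable ?_
    exact Filter.Eventually.of_forall fun η => by simpa [Real.norm_eq_abs] using hM η
  have hIF₁ := hIF g₁ hIE₁
  have hIF₂ := hIF g₂ hIE₂
  have hμint : ∀ (g : (Fin d → ℝ) → ℝ), Continuous g →
      0 < (∫ η', Real.exp (-W g η') ∂P) →
      ∫ η, F η ∂(μ g) =
        (∫ η, F η * Real.exp (-W g η) ∂P) / (∫ η, Real.exp (-W g η) ∂P) := by
    intro g hgc hZ
    rw [hμ g]
    have hdm : Measurable fun η => (Real.exp (-W g η) / ∫ η', Real.exp (-W g η') ∂P).toNNReal :=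
      ((Real.measurable_exp.comp (hWmeas g hgc).neg).div_const _).real_toNNReal
    rw [show (fun η => ENNReal.ofReal (Real.exp (-W g η) / ∫ η', Real.exp (-W g η') ∂P))
        = (fun η => ((Real.exp (-W g η) / ∫ η', Real.exp (-W g η') ∂P).toNNReal : ℝ≥0∞))
        from rfl]
    rw [integral_withDensity_eq_integral_smul hdm]
    have heq : ∀ η, ((Real.exp (-W g η) / ∫ η', Real.exp (-W g η') ∂P).toNNReal : NNReal) • F η
          = (∫ η', Real.exp (-W g η') ∂P)⁻¹ * (F η * Real.exp (-W g η)) := by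
      intro η
      rw [NNReal.smul_def, Real.coe_toNNReal _ (div_nonneg (Real.exp_pos _).le hZ.le)]
      rw [div_eq_inv_mul, smul_eq_mul]
      ring
    rw [integral_congr_ae (Filter.Eventually.of_forall heq), integral_const_mul,
      div_eq_inv_mul]
  rw [hμint g₁ hg₁c (hZ₁def ▸ hZ₁pos), hμint g₂ hg₂c (hZ₂def ▸ hZ₂pos), ← hZ₁def, ← hZ₂def]
  have hG0 : ∀ η, 0 ≤ F η + M := fun η => by have := abs_le.mp (hM η); linarith
  have hGmono : Monotone fun η => F η + M := fun a b' h => by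
    simpa using add_le_add_right (hFmono h) M
  have hGbdd : ∃ M', ∀ η, |F η + M| ≤ M' :=
    ⟨M + |M|, fun η => (abs_add_le _ _).trans (add_le_add (hM η) le_rfl)⟩
  have hmain := main (fun η => F η + M) (hFmeas.add measurable_const) hG0 hGbdd hGmono
  have expand : ∀ (g : (Fin d → ℝ) → ℝ), Integrable (fun η => Real.exp (-W g η)) P →
      Integrable (fun η => F η * Real.exp (-W g η)) P →
      ∫ η, (F η + M) * Real.exp (-W g η) ∂P
        = (∫ η, F η * Real.exp (-W g η) ∂P) + M * ∫ η, Real.exp (-W g η) ∂P := by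
    intro g hint hintF
    have heq : ∀ η, (F η + M) * Real.exp (-W g η)
        = F η * Real.exp (-W g η) + M * Real.exp (-W g η) := fun η => by ring
    rw [integral_congr_ae (Filter.Eventually.of_forall heq),
      integral_add hintF (hint.const_mul M), integral_const_mul]
  rw [expand g₁ hIE₁ hIF₁, expand g₂ hIE₂ hIF₂, ← hZ₁def, ← hZ₂def] at hmain
  have hfinal : (∫ η, F η * Real.exp (-W g₁ η) ∂P) * Z₂
      ≤ (∫ η, F η * Real.exp (-W g₂ η) ∂P) * Z₁ := by nlinarith [hmain]
  rw [div_le_div_iff₀ hZ₁pos hZ₂pos]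
  exact hfinal
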